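/- arXiv:2108.03228 — 3 statements merged into one kernel-verified Lean document; each statement's English description precedes it below -/
import Mathlib

section
/- For N ≥ 1, l ∈ {0,…,N}, k > 0, and z ∈ ℂ^N with pairwise distinct nonzero coordinates, the elementary symmetric polynomial e_l is an eigenfunction of the operator H_k f = −Σ_j z_j² ∂²f/∂z_j² − (1 − k(N−1)) Σ_j z_j ∂f/∂z_j − 2k Σ_j Σ_{m ≠ j} (z_j²/(z_j − z_m)) ∂f/∂z_j with eigenvalue −l(1 + k(N−l)); equivalently, (1/k)H_k e_l = −l(1/k + N − l) e_l. -/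
open Finset

variable {α : Type*} [DecidableEq α] (z : α → ℂ)

/-- Sum over subsets of `U` of cardinality `r` of products of `z`. -/
noncomputable def Ef (U : Finset α) (r : ℕ) : ℂ :=
  ∑ s ∈ U.powersetCard r, ∏ i ∈ s, z i

/-- `Ef` shifted down by one (0 when `r = 0`). -/
noncomputable def Efm (U : Finset α) : ℕ → ℂ
  | 0 => 0
  | (r+1) => Ef z U r

lemma Ef_insert {m : α} {U : Finset α} (hm : m ∉ U) (r : ℕ) :
    Ef z (insert m U) r = Ef z U r + z m * Efm z U r := by
  cases r with
  | zero => simp [Ef, Efm]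
  | succ r =>
    rw [Ef, powersetCard_succ_insert hm, sum_union, sum_image]
    · simp only [Efm, Ef]
      congr 1
      rw [mul_sum]
      refine sum_congr rfl fun s hs => ?_
      rw [mem_powersetCard] at hs
      rw [prod_insert (fun h => hm (hs.1 h))]
    · intro s hs t ht hst
      rw [mem_coe, mem_powersetCard] at hs ht
      have hms : m ∉ s := fun h => hm (hs.1 h)
      have hmt : m ∉ t := fun h => hm (ht.1 h)
      rw [← erase_insert hms, ← erase_insert hmt, hst]
    · rw [disjoint_right]
      intro s hs hs'
      simp only [mem_image] at hs
      obtain ⟨t, ht, rfl⟩ := hs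
      rw [mem_powersetCard] at hs' ht
      exact hm (hs'.1 (mem_insert_self m t))

lemma K1 (U : Finset α) (r : ℕ) :
    ∑ j ∈ U, z j * Ef z (U.erase j) r = ((r : ℂ) + 1) * Ef z U (r + 1) := by
  have lhs_eq : ∑ j ∈ U, z j * Ef z (U.erase j) r
      = ∑ p ∈ U.sigma (fun j => (U.erase j).powersetCard r), z p.1 * ∏ i ∈ p.2, z i := by
    rw [sum_sigma]
    exact sum_congr rfl fun j _ => by rw [Ef, mul_sum]
  have rhs_eq : ((r : ℂ) + 1) * Ef z U (r + 1)
      = ∑ p ∈ (U.powersetCard (r + 1)).sigma (fun t => t), ∏ i ∈ p.1, z i := by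
    rw [sum_sigma, Ef, mul_sum]
    refine sum_congr rfl fun t ht => ?_
    rw [mem_powersetCard] at ht
    calc ((r : ℂ) + 1) * ∏ i ∈ t, z i
        = (t.card : ℂ) * ∏ i ∈ t, z i := by rw [ht.2]; push_cast; ring
      _ = ∑ _j ∈ t, ∏ i ∈ t, z i := by rw [sum_const, nsmul_eq_mul]
      _ = ∑ j ∈ t, ∏ i ∈ (⟨t, j⟩ : Σ _ : Finset α, α).fst, z i := rfl
  rw [lhs_eq, rhs_eq]
  refine sum_nbij' (fun p => ⟨insert p.1 p.2, p.1⟩) (fun p => ⟨p.2, p.1.erase p.2⟩)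
    ?_ ?_ ?_ ?_ ?_
  · rintro ⟨j, s⟩ hp
    rw [mem_sigma, mem_powersetCard] at hp
    rw [mem_sigma, mem_powersetCard]
    obtain ⟨hj, hs, hc⟩ := hp
    have hjs : j ∉ s := fun h => (notMem_erase j U) (hs h)
    refine ⟨⟨insert_subset hj ((hs.trans (erase_subset _ _))), ?_⟩, mem_insert_self _ _⟩
    rw [card_insert_of_notMem hjs, hc]
  · rintro ⟨t, j⟩ hp
    rw [mem_sigma, mem_powersetCard] at hp
    rw [mem_sigma, mem_powersetCard]
    obtain ⟨⟨ht, hc⟩, hj⟩ := hp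
    refine ⟨ht hj, ?_, ?_⟩
    · intro x hx
      rw [mem_erase] at hx
      exact mem_erase.2 ⟨hx.1, ht hx.2⟩
    · rw [card_erase_of_mem hj, hc]
      omega
  · rintro ⟨j, s⟩ hp
    rw [mem_sigma, mem_powersetCard] at hp
    have hjs : j ∉ s := fun h => (notMem_erase j U) (hp.2.1 h)
    simp [erase_insert hjs]
  · rintro ⟨t, j⟩ hp
    rw [mem_sigma] at hp
    simp [insert_erase hp.2]
  · rintro ⟨j, s⟩ hp
    rw [mem_sigma, mem_powersetCard] at hp
    have hjs : j ∉ s := fun h => (notMem_erase j U) (hp.2.1 h)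
    simp [prod_insert hjs]

lemma K2 (U : Finset α) (r : ℕ) :
    ∑ m ∈ U, Ef z (U.erase m) r = ((U.card : ℂ) - r) * Ef z U r := by
  by_cases hr : r ≤ U.card
  · have lhs_eq : ∑ m ∈ U, Ef z (U.erase m) r
        = ∑ p ∈ U.sigma (fun m => (U.erase m).powersetCard r), ∏ i ∈ p.2, z i := by
      rw [sum_sigma]
      exact sum_congr rfl fun m _ => by rw [Ef]
    have rhs_eq : ((U.card : ℂ) - r) * Ef z U r
        = ∑ p ∈ (U.powersetCard r).sigma (fun s => U \ s), ∏ i ∈ p.1, z i := by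
      rw [sum_sigma, Ef, mul_sum]
      refine sum_congr rfl fun s hs => ?_
      rw [mem_powersetCard] at hs
      calc ((U.card : ℂ) - r) * ∏ i ∈ s, z i
          = ((U \ s).card : ℂ) * ∏ i ∈ s, z i := by
            rw [card_sdiff_of_subset hs.1, hs.2, Nat.cast_sub hr]
        _ = ∑ _m ∈ U \ s, ∏ i ∈ s, z i := by rw [sum_const, nsmul_eq_mul]
        _ = ∑ m ∈ U \ s, ∏ i ∈ (⟨s, m⟩ : Σ _ : Finset α, α).fst, z i := rfl
    rw [lhs_eq, rhs_eq]
    refine sum_nbij' (fun p => ⟨p.2, p.1⟩) (fun p => ⟨p.2, p.1⟩) ?_ ?_ ?_ ?_ ?_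
    · rintro ⟨m, s⟩ hp
      rw [mem_sigma, mem_powersetCard] at hp
      rw [mem_sigma, mem_powersetCard]
      obtain ⟨hm, hs, hc⟩ := hp
      refine ⟨⟨hs.trans (erase_subset _ _), hc⟩, mem_sdiff.2 ⟨hm, fun h => ?_⟩⟩
      exact (notMem_erase m U) (hs h)
    · rintro ⟨s, m⟩ hp
      rw [mem_sigma, mem_powersetCard] at hp
      rw [mem_sigma, mem_powersetCard]
      obtain ⟨⟨hs, hc⟩, hm⟩ := hp
      dsimp only at hm ⊢
      rw [mem_sdiff] at hm
      refine ⟨hm.1, fun x hx => mem_erase.2 ⟨fun h => hm.2 ?_, hs hx⟩, hc⟩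
      rwa [h] at hx
    · rintro ⟨m, s⟩ _; rfl
    · rintro ⟨s, m⟩ _; rfl
    · rintro ⟨m, s⟩ _; rfl
  · push_neg at hr
    have h1 : U.powersetCard r = ∅ := powersetCard_eq_empty.2 hr
    have h2 : ∀ m ∈ U, (U.erase m).powersetCard r = ∅ := by
      intro m hm
      rw [powersetCard_eq_empty, card_erase_of_mem hm]
      omega
    rw [Ef, h1]
    rw [sum_eq_zero fun m hm => by rw [Ef, h2 m hm, sum_empty]]
    simp

/-- The `l`-th elementary symmetric polynomial in `N` complex variables. -/
noncomputable def esymm (N l : ℕ) (z : Fin N → ℂ) : ℂ :=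
  ∑ s ∈ Finset.univ.powersetCard l, ∏ i ∈ s, z i

/-- Partial derivative with respect to the `j`-th coordinate. -/
noncomputable def pderiv' (N : ℕ) (f : (Fin N → ℂ) → ℂ) (j : Fin N) (z : Fin N → ℂ) : ℂ :=
  deriv (fun t => f (Function.update z j t)) (z j)

/-- Second partial derivative with respect to the `j`-th coordinate. -/
noncomputable def pderiv2 (N : ℕ) (f : (Fin N → ℂ) → ℂ) (j : Fin N) (z : Fin N → ℂ) : ℂ :=
  iteratedDeriv 2 (fun t => f (Function.update z j t)) (z j)

lemma esymm_update (N l : ℕ) (z : Fin N → ℂ) (j : Fin N) (t : ℂ) :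
    esymm N l (Function.update z j t)
      = Ef z (Finset.univ.erase j) l + t * Efm z (Finset.univ.erase j) l := by
  rw [esymm, ← sum_filter_add_sum_filter_not (univ.powersetCard l) (fun s => j ∈ s)]
  have h2 : ∑ s ∈ (univ.powersetCard l).filter (fun s => j ∉ s),
        ∏ i ∈ s, Function.update z j t i = Ef z (univ.erase j) l := by
    rw [Ef]
    refine sum_congr ?_ ?_
    · ext s
      simp only [mem_filter, mem_powersetCard, subset_erase, subset_univ, true_and]
      tauto
    · intro s hs
      rw [mem_powersetCard, subset_erase] at hs
      exact prod_congr rfl fun i hi =>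
        Function.update_of_ne (fun h => hs.1.2 (by rw [← h]; exact hi)) _ _
  have h1 : ∑ s ∈ (univ.powersetCard l).filter (fun s => j ∈ s),
        ∏ i ∈ s, Function.update z j t i = t * Efm z (univ.erase j) l := by
    cases l with
    | zero =>
      have : (univ.powersetCard 0).filter (fun s : Finset (Fin N) => j ∈ s) = ∅ := by
        ext s
        simp only [mem_filter, mem_powersetCard, notMem_empty, iff_false, not_and]
        rintro ⟨-, hc⟩
        rw [card_eq_zero] at hc
        simp [hc]
      rw [this]
      simp [Efm]
    | succ r =>
      rw [Efm, Ef, mul_sum]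
      refine sum_nbij' (fun s => s.erase j) (fun s => insert j s) ?_ ?_ ?_ ?_ ?_
      · intro s hs
        rw [mem_filter, mem_powersetCard] at hs
        rw [mem_powersetCard]
        refine ⟨fun x hx => mem_erase.2 ⟨(mem_erase.1 hx).1, subset_univ _ (mem_univ x)⟩, ?_⟩
        rw [card_erase_of_mem hs.2, hs.1.2]
        omega
      · intro s hs
        rw [mem_powersetCard] at hs
        rw [mem_filter, mem_powersetCard]
        refine ⟨⟨subset_univ _, ?_⟩, mem_insert_self _ _⟩
        rw [card_insert_of_notMem (fun h => notMem_erase j univ (hs.1 h)), hs.2]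
      · intro s hs
        rw [mem_filter] at hs
        exact insert_erase hs.2
      · intro s hs
        rw [mem_powersetCard] at hs
        exact erase_insert (fun h => notMem_erase j univ (hs.1 h))
      · intro s hs
        rw [mem_filter] at hs
        rw [← mul_prod_erase s _ hs.2, Function.update_self]
        congr 1
        exact prod_congr rfl fun i hi =>
          Function.update_of_ne (mem_erase.1 hi).1 _ _
  rw [h1, h2, add_comm]

lemma pderiv'_esymm (N l : ℕ) (z : Fin N → ℂ) (j : Fin N) :
    pderiv' N (esymm N l) j z = Efm z (Finset.univ.erase j) l := by
  rw [pderiv']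
  have hfun : (fun t => esymm N l (Function.update z j t))
      = fun t => Ef z (univ.erase j) l + t * Efm z (univ.erase j) l :=
    funext fun t => esymm_update N l z j t
  rw [hfun]
  simpa using (((hasDerivAt_id (z j)).mul_const (Efm z (univ.erase j) l)).const_add
    (Ef z (univ.erase j) l)).deriv

lemma pderiv2_esymm (N l : ℕ) (z : Fin N → ℂ) (j : Fin N) :
    pderiv2 N (esymm N l) j z = 0 := by
  rw [pderiv2]
  have hfun : (fun t => esymm N l (Function.update z j t))
      = fun t => Ef z (univ.erase j) l + t * Efm z (univ.erase j) l :=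
    funext fun t => esymm_update N l z j t
  rw [hfun, iteratedDeriv_succ, iteratedDeriv_one]
  have hd : (deriv fun t => Ef z (univ.erase j) l + t * Efm z (univ.erase j) l)
      = fun _ => Efm z (univ.erase j) l := by
    funext x
    simpa using (((hasDerivAt_id x).mul_const (Efm z (univ.erase j) l)).const_add
      (Ef z (univ.erase j) l)).deriv
  rw [hd, deriv_const]

theorem esymm_eigenfunction_Hk (N : ℕ) (hN : 1 ≤ N) (l : ℕ) (hl : l ≤ N)
    (k : ℝ) (hk : 0 < k) (z : Fin N → ℂ) (hz0 : ∀ j, z j ≠ 0)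
    (hz : Function.Injective z) :
    - ∑ j : Fin N, (z j) ^ 2 * pderiv2 N (esymm N l) j z
      - (1 - (k : ℂ) * ((N : ℂ) - 1)) * ∑ j : Fin N, z j * pderiv' N (esymm N l) j z
      - 2 * (k : ℂ) * ∑ j : Fin N, ∑ m ∈ Finset.univ.erase j,
          (z j) ^ 2 / (z j - z m) * pderiv' N (esymm N l) j z
    = - (l : ℂ) * (1 + (k : ℂ) * ((N : ℂ) - (l : ℂ))) * esymm N l z := by
  classical
  simp only [pderiv2_esymm, pderiv'_esymm, mul_zero, sum_const_zero, neg_zero, zero_sub]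
  cases l with
  | zero => simp [Efm]
  | succ r =>
    simp only [Efm]
    have hcard : ((univ : Finset (Fin N)).card = N) := by simp
    have hNcast : (((N - 1 : ℕ) : ℂ)) = (N : ℂ) - 1 := by
      rw [Nat.cast_sub hN]; norm_num
    have hesymm : esymm N (r+1) z = Ef z (univ : Finset (Fin N)) (r+1) := rfl
    have hEuler : ∑ j, z j * Ef z (univ.erase j) r
        = ((r : ℂ) + 1) * Ef z (univ : Finset (Fin N)) (r+1) := K1 z univ r
    -- the pair identity
    have hpair : ∀ j m : Fin N, m ≠ j →
        z j ^ 2 / (z j - z m) * Ef z (univ.erase j) r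
          + z m ^ 2 / (z m - z j) * Ef z (univ.erase m) r
        = (z j + z m) * Ef z ((univ.erase j).erase m) r
          + z j * z m * Efm z ((univ.erase j).erase m) r := by
      intro j m hmj
      have hne : z j ≠ z m := fun h => hmj (hz h).symm
      have hzz : z j - z m ≠ 0 := sub_ne_zero.2 hne
      have hzz' : z m - z j ≠ 0 := sub_ne_zero.2 (Ne.symm hne)
      have hBj : Ef z (univ.erase j) r
          = Ef z ((univ.erase j).erase m) r
            + z m * Efm z ((univ.erase j).erase m) r := by
        conv_lhs => rw [← insert_erase (mem_erase.2 ⟨hmj, mem_univ m⟩)]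
        exact Ef_insert z (notMem_erase _ _) r
      have hBm : Ef z (univ.erase m) r
          = Ef z ((univ.erase j).erase m) r
            + z j * Efm z ((univ.erase j).erase m) r := by
        conv_lhs => rw [← insert_erase (mem_erase.2 ⟨Ne.symm hmj, mem_univ j⟩)]
        rw [erase_right_comm]
        exact Ef_insert z (fun h => (notMem_erase j univ) (mem_of_mem_erase h)) r
      rw [hBj, hBm]
      field_simp
      ring
    -- swap lemma
    have hswapcond : ∀ x y : Fin N,
        x ∈ (univ : Finset (Fin N)) ∧ y ∈ univ.erase x ↔
        x ∈ univ.erase y ∧ y ∈ (univ : Finset (Fin N)) := by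
      intro x y
      simp only [mem_univ, mem_erase, true_and, and_true]
      exact ⟨fun h => Ne.symm h, fun h => Ne.symm h⟩
    have hswap : ∑ j : Fin N, ∑ m ∈ univ.erase j,
          z m ^ 2 / (z m - z j) * Ef z (univ.erase m) r
        = ∑ j : Fin N, ∑ m ∈ univ.erase j,
          z j ^ 2 / (z j - z m) * Ef z (univ.erase j) r := by
      exact sum_comm' hswapcond
    -- 2S
    have h2S : (∑ j : Fin N, ∑ m ∈ univ.erase j,
            z j ^ 2 / (z j - z m) * Ef z (univ.erase j) r)
          + (∑ j : Fin N, ∑ m ∈ univ.erase j,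
            z j ^ 2 / (z j - z m) * Ef z (univ.erase j) r)
        = (2 * ((N : ℂ) - 1 - r) + r) * (((r : ℂ) + 1)
            * Ef z (univ : Finset (Fin N)) (r+1)) := by
      nth_rewrite 2 [← hswap]
      rw [← sum_add_distrib]
      simp only [← sum_add_distrib]
      rw [sum_congr rfl fun j _ => sum_congr rfl fun m hm =>
        hpair j m (mem_erase.1 hm).1]
      -- now split into three sums
      have hsplit : ∑ j : Fin N, ∑ m ∈ univ.erase j,
            ((z j + z m) * Ef z ((univ.erase j).erase m) r
              + z j * z m * Efm z ((univ.erase j).erase m) r)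
          = (∑ j : Fin N, ∑ m ∈ univ.erase j, z j * Ef z ((univ.erase j).erase m) r)
            + (∑ j : Fin N, ∑ m ∈ univ.erase j, z m * Ef z ((univ.erase j).erase m) r)
            + (∑ j : Fin N, ∑ m ∈ univ.erase j,
                z j * z m * Efm z ((univ.erase j).erase m) r) := by
        rw [← sum_add_distrib]
        simp only [← sum_add_distrib]
        refine sum_congr rfl fun j _ => sum_congr rfl fun m _ => by ring
      rw [hsplit]
      have hsym1 : ∑ j : Fin N, ∑ m ∈ univ.erase j, z m * Ef z ((univ.erase j).erase m) r
          = ∑ j : Fin N, ∑ m ∈ univ.erase j, z j * Ef z ((univ.erase j).erase m) r := by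
        rw [sum_comm' hswapcond]
        refine sum_congr rfl fun j _ => sum_congr rfl fun m _ => by
          rw [erase_right_comm]
      have hT1 : ∑ j : Fin N, ∑ m ∈ univ.erase j, z j * Ef z ((univ.erase j).erase m) r
          = ((N : ℂ) - 1 - r) * (((r : ℂ) + 1) * Ef z (univ : Finset (Fin N)) (r+1)) := by
        have : ∀ j : Fin N, ∑ m ∈ univ.erase j, z j * Ef z ((univ.erase j).erase m) r
            = z j * (((N : ℂ) - 1 - r) * Ef z (univ.erase j) r) := by
          intro j
          rw [← mul_sum, K2 z (univ.erase j) r, card_erase_of_mem (mem_univ j), hcard,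
            hNcast]
        rw [sum_congr rfl fun j _ => this j]
        rw [← hEuler, mul_sum]
        exact sum_congr rfl fun j _ => by ring
      have hT2 : ∑ j : Fin N, ∑ m ∈ univ.erase j,
            z j * z m * Efm z ((univ.erase j).erase m) r
          = (r : ℂ) * (((r : ℂ) + 1) * Ef z (univ : Finset (Fin N)) (r+1)) := by
        cases r with
        | zero => simp [Efm]
        | succ q =>
          simp only [Efm]
          have : ∀ j : Fin N, ∑ m ∈ univ.erase j,
              z j * z m * Ef z ((univ.erase j).erase m) q
              = z j * (((q : ℂ) + 1) * Ef z (univ.erase j) (q+1)) := by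
            intro j
            rw [← K1 z (univ.erase j) q, mul_sum]
            exact sum_congr rfl fun m _ => by ring
          rw [sum_congr rfl fun j _ => this j, ← hEuler, mul_sum]
          refine sum_congr rfl fun j _ => ?_
          push_cast
          ring
      rw [hsym1, hT1, hT2]
      ring
    rw [hesymm]
    push_cast
    linear_combination (-(1 - (k:ℂ) * ((N:ℂ) - 1))) * hEuler + (-(k:ℂ)) * h2S
end

section
/- The function x(t) = (arcosh(e^t), −arcosh(e^t)) is, for t > 0, a solution of the system dx_1/dt = coth((x_1 − x_2)/2), dx_2/dt = coth((x_2 − x_1)/2), and it is continuous on [0,∞) with x(0) = (0,0). -/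
/-- The inverse hyperbolic cosine. -/
noncomputable def arcosh (x : ℝ) : ℝ := Real.log (x + Real.sqrt (x ^ 2 - 1))

/-- The hyperbolic cotangent. -/
noncomputable def coth (x : ℝ) : ℝ := Real.cosh x / Real.sinh x

lemma coth_arcosh {y : ℝ} (hy : 1 < y) :
    coth (arcosh y) = y / Real.sqrt (y ^ 2 - 1) := by
  set s := Real.sqrt (y ^ 2 - 1) with hs_def
  have h1 : (0:ℝ) < y ^ 2 - 1 := by nlinarith
  have hs : s ^ 2 = y ^ 2 - 1 := Real.sq_sqrt h1.le
  have hs0 : 0 < s := Real.sqrt_pos.mpr h1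
  have hpos : 0 < y + s := by linarith
  have hinv : (y + s)⁻¹ = y - s := by
    refine inv_eq_of_mul_eq_one_right ?_
    nlinarith
  rw [coth, arcosh, Real.cosh_log hpos, Real.sinh_log hpos, hinv]
  rw [show y + s - (y - s) = 2 * s by ring, show y + s + (y - s) = 2 * y by ring]
  field_simp

lemma sinh_arcosh {y : ℝ} (hy : 1 < y) :
    Real.sinh (arcosh y) = Real.sqrt (y ^ 2 - 1) := by
  set s := Real.sqrt (y ^ 2 - 1) with hs_def
  have h1 : (0:ℝ) < y ^ 2 - 1 := by nlinarith
  have hs0 : 0 < s := Real.sqrt_pos.mpr h1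
  have hpos : 0 < y + s := by linarith
  have hinv : (y + s)⁻¹ = y - s := by
    refine inv_eq_of_mul_eq_one_right ?_
    have hs : s ^ 2 = y ^ 2 - 1 := Real.sq_sqrt h1.le
    nlinarith
  rw [arcosh, Real.sinh_log hpos, hinv]
  ring

lemma hasDeriv_x1 (t : ℝ) (ht : 0 < t) :
    HasDerivAt (fun t => arcosh (Real.exp t))
      (Real.exp t / Real.sqrt ((Real.exp t) ^ 2 - 1)) t := by
  have he : (1:ℝ) < Real.exp t := by
    simpa using Real.exp_lt_exp.mpr ht
  set s := Real.sqrt ((Real.exp t) ^ 2 - 1) with hs_def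
  have h1 : (0:ℝ) < (Real.exp t) ^ 2 - 1 := by nlinarith
  have hs2 : s ^ 2 = (Real.exp t) ^ 2 - 1 := Real.sq_sqrt h1.le
  have hs0 : 0 < s := Real.sqrt_pos.mpr h1
  have hA : HasDerivAt (fun t => (Real.exp t) ^ 2 - 1)
      (2 * Real.exp t ^ 1 * Real.exp t) t := by
    simpa using ((Real.hasDerivAt_exp t).pow 2).sub_const 1
  have hB : HasDerivAt (fun t => Real.sqrt ((Real.exp t) ^ 2 - 1))
      ((2 * Real.exp t ^ 1 * Real.exp t) / (2 * s)) t := hA.sqrt (by positivity)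
  have hC : HasDerivAt (fun t => Real.exp t + Real.sqrt ((Real.exp t) ^ 2 - 1))
      (Real.exp t + (2 * Real.exp t ^ 1 * Real.exp t) / (2 * s)) t :=
    (Real.hasDerivAt_exp t).add hB
  have hne : Real.exp t + s ≠ 0 := by positivity
  have hD := hC.log hne
  have : (Real.exp t + 2 * Real.exp t ^ 1 * Real.exp t / (2 * s)) / (Real.exp t + s)
      = Real.exp t / s := by
    field_simp
    ring
  rw [this] at hD
  exact hD

/-- For `N = 2`, the curve `t ↦ (arcosh(eᵗ), −arcosh(eᵗ))` solves
`dx₁/dt = coth((x₁−x₂)/2)`, `dx₂/dt = coth((x₂−x₁)/2)` for `t > 0`,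
is continuous on `[0,∞)` and starts at `(0,0)`. -/
theorem solution_ode_noncompact_A_N2
    (x₁ x₂ : ℝ → ℝ) (h₁ : ∀ t, x₁ t = arcosh (Real.exp t)) (h₂ : ∀ t, x₂ t = - x₁ t) :
    (∀ t > 0, HasDerivAt x₁ (coth ((x₁ t - x₂ t) / 2)) t ∧
        HasDerivAt x₂ (coth ((x₂ t - x₁ t) / 2)) t) ∧
    ContinuousOn x₁ (Set.Ici 0) ∧ ContinuousOn x₂ (Set.Ici 0) ∧
    x₁ 0 = 0 ∧ x₂ 0 = 0 := by
  have hx₁ : x₁ = fun t => arcosh (Real.exp t) := funext h₁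
  have hx₂ : x₂ = fun t => - arcosh (Real.exp t) := by
    funext t; rw [h₂ t, h₁ t]
  have hcont : Continuous fun t => arcosh (Real.exp t) := by
    apply Continuous.log
    · exact Real.continuous_exp.add
        (((Real.continuous_exp.pow 2).sub continuous_const).sqrt)
    · intro t
      have := Real.exp_pos t
      have := Real.sqrt_nonneg ((Real.exp t) ^ 2 - 1)
      positivity
  have hzero : arcosh (Real.exp 0) = 0 := by
    simp [arcosh]
  refine ⟨?_, ?_, ?_, ?_, ?_⟩
  · intro t ht
    have he : (1:ℝ) < Real.exp t := by simpa using Real.exp_lt_exp.mpr ht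
    have harg : (x₁ t - x₂ t) / 2 = arcosh (Real.exp t) := by
      rw [h₂ t, h₁ t]; ring
    have harg2 : (x₂ t - x₁ t) / 2 = - arcosh (Real.exp t) := by
      rw [h₂ t, h₁ t]; ring
    have hcoth : coth (arcosh (Real.exp t)) = Real.exp t / Real.sqrt ((Real.exp t) ^ 2 - 1) :=
      coth_arcosh he
    constructor
    · rw [harg, hcoth, hx₁]
      exact hasDeriv_x1 t ht
    · rw [harg2]
      have : coth (- arcosh (Real.exp t)) = - coth (arcosh (Real.exp t)) := by
        simp [coth, Real.cosh_neg, Real.sinh_neg, neg_div, div_neg]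
      rw [this, hcoth, hx₂]
      exact (hasDeriv_x1 t ht).neg
  · rw [hx₁]; exact hcont.continuousOn
  · rw [hx₂]; exact hcont.neg.continuousOn
  · rw [h₁ 0, hzero]
  · rw [h₂ 0, h₁ 0, hzero, neg_zero]
end

section
/- For t > 0 and x_1(t) = arcosh((3e^{2t} − 1)/2), the curve x(t) = (x_1(t), 0, −x_1(t)) solves the N = 3 system dx_j/dt = Σ_{l≠j} coth((x_j − x_l)/2), j = 1,2,3, and extends continuously to [0,∞) with x(0) = (0,0,0). -/
lemma coth_neg (x : ℝ) : coth (-x) = - coth x := by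
  simp [coth, Real.sinh_neg, Real.cosh_neg, div_neg]

lemma arcosh_props {y : ℝ} (hy : 1 < y) :
    Real.cosh (arcosh y) = y ∧ Real.sinh (arcosh y) = Real.sqrt (y ^ 2 - 1) ∧
      0 < arcosh y := by
  set s := Real.sqrt (y ^ 2 - 1) with hs
  have hs2 : s ^ 2 = y ^ 2 - 1 := Real.sq_sqrt (by nlinarith)
  have hsnn : 0 ≤ s := Real.sqrt_nonneg _
  have hpos : 0 < y + s := by linarith
  have hexp : Real.exp (arcosh y) = y + s := Real.exp_log hpos
  have hexpneg : Real.exp (-(arcosh y)) = y - s := by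
    rw [Real.exp_neg, hexp]
    field_simp
    nlinarith [hs2]
  refine ⟨?_, ?_, ?_⟩
  · rw [Real.cosh_eq, hexp, hexpneg]; ring
  · rw [Real.sinh_eq, hexp, hexpneg]; ring
  · exact Real.log_pos (by linarith)

lemma coth_half_add {a : ℝ} (ha : 0 < a) :
    coth (a / 2) + coth a = (2 * Real.cosh a + 1) / Real.sinh a := by
  have hsh : 0 < Real.sinh (a / 2) := Real.sinh_pos_iff.2 (by linarith)
  have hch : 0 < Real.cosh (a / 2) := Real.cosh_pos (a / 2)
  have hsinh : Real.sinh a = 2 * Real.sinh (a / 2) * Real.cosh (a / 2) := by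
    have := Real.sinh_two_mul (a / 2)
    rwa [show 2 * (a / 2) = a by ring] at this
  have hcosh : Real.cosh a = 2 * Real.cosh (a / 2) ^ 2 - 1 := by
    have h1 := Real.cosh_two_mul (a / 2)
    have h2 := Real.cosh_sq_sub_sinh_sq (a / 2)
    rw [show 2 * (a / 2) = a by ring] at h1
    linarith
  rw [coth, coth, hsinh, hcosh]
  field_simp
  ring

lemma ygt1 (t : ℝ) (ht : 0 < t) : (1 : ℝ) < (3 * Real.exp (2 * t) - 1) / 2 := by
  have h : (1 : ℝ) < Real.exp (2 * t) := by
    have := Real.add_one_le_exp (2 * t)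
    linarith
  linarith

lemma hasDerivAt_x1 (t : ℝ) (ht : 0 < t) :
    HasDerivAt (fun t => arcosh ((3 * Real.exp (2 * t) - 1) / 2))
      (3 * Real.exp (2 * t) /
        Real.sqrt (((3 * Real.exp (2 * t) - 1) / 2) ^ 2 - 1)) t := by
  have hyt : (1 : ℝ) < (3 * Real.exp (2 * t) - 1) / 2 := ygt1 t ht
  set s : ℝ := Real.sqrt (((3 * Real.exp (2 * t) - 1) / 2) ^ 2 - 1) with hs_def
  have hs2 : s ^ 2 = ((3 * Real.exp (2 * t) - 1) / 2) ^ 2 - 1 :=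
    Real.sq_sqrt (by nlinarith)
  have hspos : 0 < s := Real.sqrt_pos.2 (by nlinarith)
  have h1 : HasDerivAt (fun x : ℝ => 2 * x) 2 t := by
    simpa using (hasDerivAt_id t).const_mul 2
  have h2 : HasDerivAt (fun x : ℝ => Real.exp (2 * x)) (Real.exp (2 * t) * 2) t := h1.exp
  have hy : HasDerivAt (fun x : ℝ => (3 * Real.exp (2 * x) - 1) / 2)
      (3 * Real.exp (2 * t)) t := by
    have := ((h2.const_mul 3).sub_const 1).div_const 2
    exact this.congr_deriv (by ring)
  have hinner : HasDerivAt (fun x : ℝ => ((3 * Real.exp (2 * x) - 1) / 2) ^ 2 - 1)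
      (2 * ((3 * Real.exp (2 * t) - 1) / 2) * (3 * Real.exp (2 * t))) t := by
    have := (hy.pow 2).sub_const 1
    exact this.congr_deriv (by simp)
  have hsqrt : HasDerivAt
      (fun x : ℝ => Real.sqrt (((3 * Real.exp (2 * x) - 1) / 2) ^ 2 - 1))
      (1 / (2 * s) * (2 * ((3 * Real.exp (2 * t) - 1) / 2) * (3 * Real.exp (2 * t)))) t :=
    (Real.hasDerivAt_sqrt (by nlinarith)).comp t hinner
  have hg := hy.add hsqrt
  have hgpos : 0 < (3 * Real.exp (2 * t) - 1) / 2 + s := by linarith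
  have hlog := (Real.hasDerivAt_log hgpos.ne').comp t hg
  have hfinal : HasDerivAt (fun x => arcosh ((3 * Real.exp (2 * x) - 1) / 2))
      (((3 * Real.exp (2 * t) - 1) / 2 + s)⁻¹ *
        (3 * Real.exp (2 * t) +
          1 / (2 * s) * (2 * ((3 * Real.exp (2 * t) - 1) / 2) * (3 * Real.exp (2 * t))))) t := by
    exact hlog
  convert hfinal using 1
  rw [eq_comm, inv_mul_eq_div, div_eq_div_iff hgpos.ne' hspos.ne']
  field_simp
  ring

/-- For `N = 3`, the curve `t ↦ (x₁(t), 0, −x₁(t))` with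
`x₁(t) = arcosh((3e^{2t} − 1)/2)` solves `dx_j/dt = Σ_{l≠j} coth((x_j − x_l)/2)`
for `t > 0`, is continuous on `[0,∞)` and starts at `(0,0,0)`. -/
theorem solution_ode_noncompact_A_N3
    (x₁ x₂ x₃ : ℝ → ℝ) (h₁ : ∀ t, x₁ t = arcosh ((3 * Real.exp (2 * t) - 1) / 2))
    (h₂ : ∀ t, x₂ t = 0) (h₃ : ∀ t, x₃ t = - x₁ t) :
    (∀ t > 0,
        HasDerivAt x₁ (coth ((x₁ t - x₂ t) / 2) + coth ((x₁ t - x₃ t) / 2)) t ∧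
        HasDerivAt x₂ (coth ((x₂ t - x₁ t) / 2) + coth ((x₂ t - x₃ t) / 2)) t ∧
        HasDerivAt x₃ (coth ((x₃ t - x₁ t) / 2) + coth ((x₃ t - x₂ t) / 2)) t) ∧
    ContinuousOn x₁ (Set.Ici 0) ∧ ContinuousOn x₃ (Set.Ici 0) ∧
    x₁ 0 = 0 ∧ x₂ 0 = 0 ∧ x₃ 0 = 0 := by
  have hx₁ : x₁ = fun t => arcosh ((3 * Real.exp (2 * t) - 1) / 2) := funext h₁
  have hx₂ : x₂ = fun _ => (0 : ℝ) := funext h₂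
  subst hx₁ hx₂
  have hx₃ : x₃ = fun t => -(arcosh ((3 * Real.exp (2 * t) - 1) / 2)) := funext h₃
  subst hx₃
  have hcont : ContinuousOn (fun t => arcosh ((3 * Real.exp (2 * t) - 1) / 2))
      (Set.Ici (0 : ℝ)) := by
    intro t ht
    have hyt : (0 : ℝ) < (3 * Real.exp (2 * t) - 1) / 2 := by
      have h0 : (0 : ℝ) ≤ t := ht
      have := Real.add_one_le_exp (2 * t)
      linarith
    have hc : Continuous (fun t : ℝ =>
        (3 * Real.exp (2 * t) - 1) / 2 +
          Real.sqrt (((3 * Real.exp (2 * t) - 1) / 2) ^ 2 - 1)) := by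
      fun_prop
    have hpos : 0 < (3 * Real.exp (2 * t) - 1) / 2 +
        Real.sqrt (((3 * Real.exp (2 * t) - 1) / 2) ^ 2 - 1) := by
      have := Real.sqrt_nonneg (((3 * Real.exp (2 * t) - 1) / 2) ^ 2 - 1)
      linarith
    exact (hc.continuousAt.log hpos.ne').continuousWithinAt
  refine ⟨?_, hcont, hcont.neg, ?_, rfl, ?_⟩
  · intro t ht
    have hyt : (1 : ℝ) < (3 * Real.exp (2 * t) - 1) / 2 := ygt1 t ht
    obtain ⟨hcosh, hsinh, hapos⟩ := arcosh_props hyt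
    have hspos : 0 < Real.sqrt (((3 * Real.exp (2 * t) - 1) / 2) ^ 2 - 1) :=
      Real.sqrt_pos.2 (by nlinarith)
    set a : ℝ := arcosh ((3 * Real.exp (2 * t) - 1) / 2) with ha_def
    have hsum : coth (a / 2) + coth a = 3 * Real.exp (2 * t) /
        Real.sqrt (((3 * Real.exp (2 * t) - 1) / 2) ^ 2 - 1) := by
      rw [coth_half_add hapos, hcosh, hsinh]
      congr 1
      ring
    have hd : HasDerivAt (fun t => arcosh ((3 * Real.exp (2 * t) - 1) / 2))
        (coth (a / 2) + coth a) t := by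
      rw [hsum]; exact hasDerivAt_x1 t ht
    refine ⟨?_, ?_, ?_⟩
    · show HasDerivAt (fun t => arcosh ((3 * Real.exp (2 * t) - 1) / 2))
        (coth ((a - 0) / 2) + coth ((a - -a) / 2)) t
      rw [show (a - 0) / 2 = a / 2 by ring, show (a - -a) / 2 = a by ring]
      exact hd
    · show HasDerivAt (fun _ : ℝ => (0 : ℝ))
        (coth ((0 - a) / 2) + coth ((0 - -a) / 2)) t
      have h0 : coth ((0 - a) / 2) + coth ((0 - -a) / 2) = 0 := by
        rw [show (0 - a) / 2 = -(a / 2) by ring, show (0 - -a) / 2 = a / 2 by ring,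
          coth_neg]
        ring
      rw [h0]
      exact hasDerivAt_const t 0
    · show HasDerivAt (fun t => -(arcosh ((3 * Real.exp (2 * t) - 1) / 2)))
        (coth ((-a - a) / 2) + coth ((-a - 0) / 2)) t
      have h0 : coth ((-a - a) / 2) + coth ((-a - 0) / 2) = -(coth (a / 2) + coth a) := by
        rw [show (-a - a) / 2 = -a by ring, show (-a - 0) / 2 = -(a / 2) by ring,
          coth_neg, coth_neg]
        ring
      rw [h0]
      exact hd.neg
  · show arcosh ((3 * Real.exp (2 * 0) - 1) / 2) = 0
    norm_num [arcosh]
  · show -(arcosh ((3 * Real.exp (2 * 0) - 1) / 2)) = 0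
    norm_num [arcosh]
end
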